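/- Let H be a finite simple graph with vertex set V, let S ⊆ V, and let X ⊆ V be a 1/2-separator of S in H, i.e., every connected component C of the subgraph of H induced on V ∖ X satisfies |C ∩ S| ≤ |S|/2. For u,v ∈ V define d(u,v) = 1 if u ∈ X, or v ∈ X, or u and v lie in different connected components of the subgraph of H induced on V ∖ X, and d(u,v) = 0 otherwise. Then for every U ⊆ S and every u ∈ U, ∑_{v ∈ U} d(u,v) ≥ |U| − |S|/2. -/
import Mathlib

open Classical in
/-- `u` and `v` are connected in `H` by a walk all of whose vertices avoid `X`. -/
def ReachAvoiding {V : Type*} (H : SimpleGraph V) (X : Set V) (u v : V) : Prop :=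
  ∃ p : H.Walk u v, ∀ t ∈ p.support, t ∉ X

lemma ReachAvoiding.symm {V : Type*} {H : SimpleGraph V} {X : Set V} {u v : V}
    (h : ReachAvoiding H X u v) : ReachAvoiding H X v u := by
  obtain ⟨p, hp⟩ := h
  exact ⟨p.reverse, fun t ht => hp t (by simpa using ht)⟩

open Classical in
/-- The indicator distances induced by a 1/2-separator satisfy the spreading constraints
(key claim in the proof of Lemma 3.1). -/
theorem separator_indicator_satisfies_spreading
    {V : Type*} [Fintype V] [DecidableEq V] (H : SimpleGraph V) (S X : Finset V)
    (hsep : ∀ v : V, v ∉ X →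
      ((({u | ReachAvoiding H (↑X) u v} ∩ (↑S : Set V)).ncard : ℝ)) ≤ (S.card : ℝ) / 2)
    (d : V → V → ℝ)
    (hd : ∀ u v : V,
      d u v = if u ∈ X ∨ v ∈ X ∨ ¬ ReachAvoiding H (↑X) u v then 1 else 0) :
    ∀ U ⊆ S, ∀ u ∈ U, (U.card : ℝ) - (S.card : ℝ) / 2 ≤ ∑ v ∈ U, d u v := by
  intro U hUS u huU
  classical
  set P : V → Prop := fun v => u ∈ X ∨ v ∈ X ∨ ¬ ReachAvoiding H (↑X) u v with hP
  have hsum : ∑ v ∈ U, d u v = (U.filter P).card := by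
    rw [Finset.card_filter]
    push_cast
    refine Finset.sum_congr rfl fun v hv => ?_
    rw [hd u v]
  rw [hsum]
  have hsplit : (U.filter P).card + (U.filter (fun v => ¬ P v)).card = U.card :=
    Finset.card_filter_add_card_filter_not _
  have hbound : ((U.filter (fun v => ¬ P v)).card : ℝ) ≤ (S.card : ℝ) / 2 := by
    by_cases huX : u ∈ X
    · have : U.filter (fun v => ¬ P v) = ∅ := by
        ext v; simp [hP, huX]
      rw [this]; simp; positivity
    · have hsub : (↑(U.filter fun v => ¬ P v) : Set V) ⊆
          {w | ReachAvoiding H (↑X) w u} ∩ (↑S : Set V) := by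
        intro v hv
        simp only [Finset.coe_filter, Set.mem_setOf_eq] at hv
        obtain ⟨hvU, hnp⟩ := hv
        simp only [hP, not_or, not_not] at hnp
        exact ⟨hnp.2.2.symm, hUS hvU⟩
      have h1 : ((U.filter fun v => ¬ P v).card : ℝ) =
          ((↑(U.filter fun v => ¬ P v) : Set V)).ncard := by
        rw [Set.ncard_coe_finset]
      rw [h1]
      calc (((↑(U.filter fun v => ¬ P v) : Set V)).ncard : ℝ)
          ≤ (({w | ReachAvoiding H (↑X) w u} ∩ (↑S : Set V)).ncard : ℝ) := by
            exact_mod_cast Set.ncard_le_ncard hsub (Set.toFinite _)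
        _ ≤ (S.card : ℝ) / 2 := hsep u huX
  have : (U.card : ℝ) = ((U.filter P).card : ℝ) + ((U.filter (fun v => ¬ P v)).card : ℝ) := by
    exact_mod_cast hsplit.symm
  linarith
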